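/- Suppose n ≥ 1. For every error vector e and every nonzero error vector v in (Fin n → ZMod 2), one has π(v) = e if and only if v ∈ C(e); that is, the children of e are exactly the nonzero vectors whose parent is e. -/
import Mathlib


/-- The index of the least reliable flipped bit: the largest coordinate `j`
with `e j ≠ 0` (as a natural number; `0` if `e = 0`). -/
def jstar {n : ℕ} (e : Fin n → ZMod 2) : ℕ :=
  (Finset.univ.filter fun j => e j ≠ 0).sup fun j => (j : ℕ)

/-- The parent `π(e)` of an error vector: zero out coordinate `j*(e)` and,
if `j*(e) > 0`, set coordinate `j*(e) - 1` to `1`; `π(0) = 0`. -/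
def parent {n : ℕ} (e : Fin n → ZMod 2) : Fin n → ZMod 2 :=
  if e = 0 then 0
  else fun j =>
    if (j : ℕ) = jstar e then 0
    else if 0 < jstar e ∧ (j : ℕ) = jstar e - 1 then 1
    else e j
/-- `deltaN k` is the vector with a `1` at the coordinate of index `k` and `0` elsewhere. -/
def deltaN {n : ℕ} (k : ℕ) : Fin n → ZMod 2 := fun i => if (i : ℕ) = k then 1 else 0

/-- The children set `C(e)`. -/
def children {n : ℕ} (e : Fin n → ZMod 2) : Finset (Fin n → ZMod 2) :=
  if e = 0 then {deltaN 0}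
  else if jstar e = n - 1 then ∅
  else {e + deltaN (jstar e + 1), e + deltaN (jstar e) + deltaN (jstar e + 1)}

lemma zmod2_cases : ∀ a : ZMod 2, a = 0 ∨ a = 1 := by decide

lemma le_jstar {n : ℕ} (v : Fin n → ZMod 2) (j : Fin n) (h : v j ≠ 0) :
    (j : ℕ) ≤ jstar v :=
  Finset.le_sup (f := fun j : Fin n => (j : ℕ)) (by simp [h])

lemma exists_jstar {n : ℕ} (v : Fin n → ZMod 2) (hv : v ≠ 0) :
    ∃ j : Fin n, (j : ℕ) = jstar v ∧ v j = 1 := by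
  obtain ⟨j, hj⟩ : ∃ j, v j ≠ 0 := by
    by_contra h; push_neg at h; exact hv (funext fun j => h j)
  have hne : (Finset.univ.filter fun j => v j ≠ 0).Nonempty := ⟨j, by simp [hj]⟩
  obtain ⟨b, hb, hsup⟩ := Finset.exists_mem_eq_sup _ hne (fun j : Fin n => (j : ℕ))
  simp only [Finset.mem_filter] at hb
  refine ⟨b, hsup.symm, ?_⟩
  rcases zmod2_cases (v b) with h | h
  · exact absurd h hb.2
  · exact h

lemma eq_zero_of_gt {n : ℕ} (v : Fin n → ZMod 2) (j : Fin n) (h : jstar v < (j : ℕ)) :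
    v j = 0 := by
  rcases zmod2_cases (v j) with h0 | h1
  · exact h0
  · exact absurd (le_jstar v j (by simp [h1])) (by omega)

lemma jstar_le {n : ℕ} (v : Fin n → ZMod 2) (k : ℕ)
    (h : ∀ j : Fin n, v j ≠ 0 → (j : ℕ) ≤ k) : jstar v ≤ k :=
  Finset.sup_le fun j hj => h j (by simpa using hj)

theorem parent_eq_iff_mem_children {n : ℕ} (hn : 1 ≤ n)
    (e v : Fin n → ZMod 2) (hv : v ≠ 0) :
    parent v = e ↔ v ∈ children e := by
  obtain ⟨jv, hjv, hv1⟩ := exists_jstar v hv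
  obtain ⟨k, hkeq⟩ : ∃ k, jstar v = k := ⟨_, rfl⟩
  rw [hkeq] at hjv
  have hkn : k < n := hjv ▸ jv.isLt
  have hvk : ∀ j : Fin n, (j : ℕ) = k → v j = 1 := by
    intro j hj
    have : j = jv := Fin.ext (by omega)
    rw [this, hv1]
  have hvgt : ∀ j : Fin n, k < (j : ℕ) → v j = 0 := by
    intro j hj
    exact eq_zero_of_gt v j (by omega)
  constructor
  · rintro rfl
    by_cases hk : k = 0
    · -- parent v = 0 and v = deltaN 0
      subst hk
      have hpe : parent v = 0 := by
        funext j
        simp only [parent, if_neg hv, hkeq, Pi.zero_apply]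
        split_ifs with h1 h2
        · rfl
        · omega
        · exact hvgt j (by omega)
      have hveq : v = deltaN 0 := by
        funext j
        by_cases h : (j : ℕ) = 0
        · rw [hvk j h]; simp [deltaN, h]
        · rw [hvgt j (by omega)]; simp [deltaN, h]
      rw [hpe]
      simp [children, hveq]
    · -- k > 0
      have h0 : 0 < k := Nat.pos_of_ne_zero hk
      have hk1n : k - 1 < n := by omega
      have hejm : parent v ⟨k - 1, hk1n⟩ = 1 := by
        simp only [parent, if_neg hv, hkeq]
        rw [if_neg (by omega : ¬ k - 1 = k), if_pos ⟨h0, trivial⟩]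
      have hene : parent v ≠ 0 := by
        intro h
        have := congrFun h ⟨k - 1, hk1n⟩
        rw [hejm] at this
        exact one_ne_zero this
      have hjse : jstar (parent v) = k - 1 := by
        have h1 : k - 1 ≤ jstar (parent v) := by
          have := le_jstar (parent v) ⟨k - 1, hk1n⟩ (by rw [hejm]; exact one_ne_zero)
          simpa using this
        have h2 : jstar (parent v) ≤ k - 1 := by
          apply jstar_le
          intro j hj
          simp only [parent, if_neg hv, hkeq] at hj
          split_ifs at hj with h1' h2'
          · exact absurd rfl hj
          · omega
          · have hle : (j : ℕ) ≤ jstar v := le_jstar v j hj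
            rw [hkeq] at hle
            omega
        omega
      have hnotlast : jstar (parent v) ≠ n - 1 := by rw [hjse]; omega
      have hsucc : jstar (parent v) + 1 = k := by rw [hjse]; omega
      rw [children, if_neg hene, if_neg hnotlast, hsucc, hjse]
      rcases zmod2_cases (v ⟨k - 1, hk1n⟩) with hm0 | hm1
      · -- v = parent v + deltaN (k-1) + deltaN k
        have hveq : v = parent v + deltaN (k - 1) + deltaN k := by
          funext j
          simp only [Pi.add_apply, parent, if_neg hv, hkeq, deltaN]
          by_cases hjk : (j : ℕ) = k
          · rw [hvk j hjk]
            simp [hjk, show k ≠ k - 1 by omega]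
          · by_cases hjm : (j : ℕ) = k - 1
            · have hj' : j = ⟨k - 1, hk1n⟩ := Fin.ext hjm
              rw [hj', hm0]
              simp [show ¬ (k - 1 = k) by omega, h0,
                show (1 : ZMod 2) + 1 = 0 by decide]
            · simp [hjk, hjm]
        simp only [Finset.mem_insert, Finset.mem_singleton]
        exact Or.inr hveq
      · -- v = parent v + deltaN k
        have hveq : v = parent v + deltaN k := by
          funext j
          simp only [Pi.add_apply, parent, if_neg hv, hkeq, deltaN]
          by_cases hjk : (j : ℕ) = k
          · rw [hvk j hjk]
            simp [hjk, show k ≠ k - 1 by omega]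
          · by_cases hjm : (j : ℕ) = k - 1
            · have hj' : j = ⟨k - 1, hk1n⟩ := Fin.ext hjm
              rw [hj', hm1]
              simp [show ¬ (k - 1 = k) by omega, h0,
                show (1 : ZMod 2) + 1 = 0 by decide]
            · simp [hjk, hjm]
        simp only [Finset.mem_insert, Finset.mem_singleton]
        exact Or.inl hveq
  · intro hmem
    by_cases he : e = 0
    · subst he
      simp [children] at hmem
      subst hmem
      have hne : (deltaN 0 : Fin n → ZMod 2) ≠ 0 := hv
      have hjs : jstar (deltaN 0 : Fin n → ZMod 2) = 0 := by
        apply Nat.le_antisymm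
        · apply jstar_le
          intro j hj
          simp only [deltaN] at hj
          split_ifs at hj with h
          · omega
          · exact absurd rfl hj
        · exact Nat.zero_le _
      funext j
      simp only [parent, if_neg hne, hjs, Pi.zero_apply]
      split_ifs with h1 h2
      · rfl
      · omega
      · simp [deltaN, h1]
    · rw [children, if_neg he] at hmem
      by_cases hlast : jstar e = n - 1
      · rw [if_pos hlast] at hmem; exact absurd hmem (Finset.notMem_empty _)
      · rw [if_neg hlast] at hmem
        obtain ⟨m, hmeq⟩ : ∃ m, jstar e = m := ⟨_, rfl⟩
        rw [hmeq] at hmem hlast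
        obtain ⟨je, hje, he1⟩ := exists_jstar e he
        rw [hmeq] at hje
        have hmn : m < n := hje ▸ je.isLt
        have hm1n : m + 1 < n := by omega
        have hegt : ∀ j : Fin n, m < (j : ℕ) → e j = 0 := by
          intro j hj
          exact eq_zero_of_gt e j (by omega)
        simp only [Finset.mem_insert, Finset.mem_singleton] at hmem
        have hvsucc : v ⟨m + 1, hm1n⟩ = 1 ∧ ∀ j : Fin n, m + 1 < (j : ℕ) → v j = 0 := by
          rcases hmem with rfl | rfl
          · constructor
            · simp only [Pi.add_apply, deltaN]
              rw [hegt ⟨m + 1, hm1n⟩ (by simp)]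
              simp
            · intro j hj
              simp only [Pi.add_apply, deltaN]
              rw [hegt j (by omega)]
              simp [show (j : ℕ) ≠ m + 1 by omega]
          · constructor
            · simp only [Pi.add_apply, deltaN]
              rw [hegt ⟨m + 1, hm1n⟩ (by simp)]
              simp [show m + 1 ≠ m by omega]
            · intro j hj
              simp only [Pi.add_apply, deltaN]
              rw [hegt j (by omega)]
              simp [show (j : ℕ) ≠ m + 1 by omega, show (j : ℕ) ≠ m by omega]
        have hjsv : jstar v = m + 1 := by
          apply Nat.le_antisymm
          · apply jstar_le
            intro j hj
            by_contra h
            exact hj (hvsucc.2 j (by omega))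
          · have := le_jstar v ⟨m + 1, hm1n⟩ (by rw [hvsucc.1]; exact one_ne_zero)
            simpa using this
        funext j
        simp only [parent, if_neg hv, hjsv, Nat.add_sub_cancel]
        split_ifs with h1 h2
        · exact (hegt j (by omega)).symm
        · have hj' : j = je := Fin.ext (by omega)
          rw [hj', he1]
        · have hjm : (j : ℕ) ≠ m := fun hh => h2 ⟨Nat.succ_pos m, hh⟩
          rcases hmem with rfl | rfl
          · simp only [Pi.add_apply, deltaN]
            rw [if_neg h1]
            simp
          · simp only [Pi.add_apply, deltaN]
            rw [if_neg hjm, if_neg h1]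
            simp
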